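/- arXiv:2203.14931 — 8 statements merged into one kernel-verified Lean document; each statement's English description precedes it below -/
import Mathlib

section
/- Let r > 1, set λ = √(r² − 1)/r, and let c₁, c₂, c₃ ∈ ℝ satisfy c₁² + c₂² = 1. Define D(s) = c₁/r + cosh(λs + c₃) and v¹(s) = −λ·sinh(λs + c₃)/D(s), v²(s) = (c₁ + (1/r)·cosh(λs + c₃))/D(s), v³(s) = λ·c₂/D(s). Then D(s) > 0 for every s ∈ ℝ, and (v¹, v², v³) solves the circular-tractrix ODE system with parameter r, including the unit-length constraint (v¹(s))² + (v²(s))² + (v³(s))² = 1 for all s ∈ ℝ. -/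
/-- The circular-tractrix ODE system with parameter `r`. -/
def SolvesCircularTractrix (r : ℝ) (v1 v2 v3 : ℝ → ℝ) : Prop :=
  (∀ s : ℝ, HasDerivAt v1 ((1 / r) * v2 s + (v1 s) ^ 2 - 1) s) ∧
  (∀ s : ℝ, HasDerivAt v2 (-(1 / r) * v1 s + v1 s * v2 s) s) ∧
  (∀ s : ℝ, HasDerivAt v3 (v1 s * v3 s) s)

theorem stmt0 (r c₁ c₂ c₃ lam : ℝ) (hr : 1 < r)
    (hc : c₁ ^ 2 + c₂ ^ 2 = 1)
    (hlam : lam = Real.sqrt (r ^ 2 - 1) / r)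
    (D v1 v2 v3 : ℝ → ℝ)
    (hD : ∀ s, D s = c₁ / r + Real.cosh (lam * s + c₃))
    (hv1 : ∀ s, v1 s = -(lam * Real.sinh (lam * s + c₃)) / D s)
    (hv2 : ∀ s, v2 s = (c₁ + (1 / r) * Real.cosh (lam * s + c₃)) / D s)
    (hv3 : ∀ s, v3 s = lam * c₂ / D s) :
    (∀ s : ℝ, 0 < D s) ∧
    SolvesCircularTractrix r v1 v2 v3 ∧
    (∀ s : ℝ, (v1 s) ^ 2 + (v2 s) ^ 2 + (v3 s) ^ 2 = 1) := by
  have hr0 : (0:ℝ) < r := by linarith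
  have hrne : r ≠ 0 := hr0.ne'
  have hl2 : lam ^ 2 * r ^ 2 = r ^ 2 - 1 := by
    rw [hlam, div_pow, Real.sq_sqrt (by nlinarith : (0:ℝ) ≤ r ^ 2 - 1)]
    field_simp
  have hc1 : -1 ≤ c₁ := by nlinarith
  have hDpos : ∀ s : ℝ, 0 < D s := by
    intro s
    rw [hD s]
    have h1 : (1:ℝ) ≤ Real.cosh (lam * s + c₃) := Real.one_le_cosh _
    have h2 : -1 < c₁ / r := by
      rw [lt_div_iff₀ hr0]; nlinarith
    linarith
  have hDe : D = fun s => c₁ / r + Real.cosh (lam * s + c₃) := funext hD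
  have hv1e : v1 = fun s => -(lam * Real.sinh (lam * s + c₃)) / D s := funext hv1
  have hv2e : v2 = fun s => (c₁ + (1 / r) * Real.cosh (lam * s + c₃)) / D s := funext hv2
  have hv3e : v3 = fun s => lam * c₂ / D s := funext hv3
  subst hv1e hv2e hv3e
  have hDd : ∀ s : ℝ, HasDerivAt D (Real.sinh (lam * s + c₃) * lam) s := by
    intro s
    have hu : HasDerivAt (fun s : ℝ => lam * s + c₃) lam s := by
      simpa using ((hasDerivAt_id s).const_mul lam).add_const c₃
    rw [hDe]
    simpa using (hu.cosh.const_add (c₁ / r))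
  have hu : ∀ s : ℝ, HasDerivAt (fun s : ℝ => lam * s + c₃) lam s := by
    intro s
    simpa using ((hasDerivAt_id s).const_mul lam).add_const c₃
  refine ⟨hDpos, ⟨?_, ?_, ?_⟩, ?_⟩ <;> intro s <;>
    have hne := (hDpos s).ne' <;>
    have hS := Real.cosh_sq_sub_sinh_sq (lam * s + c₃) <;>
    have hD' : c₁ / r + Real.cosh (lam * s + c₃) ≠ 0 := by rw [← hD s]; exact hne
  all_goals have hd2 := pow_ne_zero 2 hD'
  all_goals have hD2 : c₁ + Real.cosh (lam * s + c₃) * r ≠ 0 := by intro h; apply hD'; field_simp; linarith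
  · have h := (((hu s).sinh.const_mul lam).neg).div (hDd s) hne
    refine h.congr_deriv (Eq.symm ?_)
    simp only [hD]
    simp only [Pi.neg_apply]
    set C := Real.cosh (lam * s + c₃)
    set S := Real.sinh (lam * s + c₃)
    have hD3 : c₁ + r * C ≠ 0 := by rwa [mul_comm]
    field_simp
    linear_combination (c₁ * C + r * C ^ 2) * hl2
  · have h := (((hu s).cosh.const_mul (1/r)).const_add c₁).div (hDd s) hne
    refine h.congr_deriv (Eq.symm ?_)
    simp only [hD]
    have hD3 : c₁ + r * Real.cosh (lam * s + c₃) ≠ 0 := by rwa [mul_comm]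
    field_simp
    ring
  · have h := (hasDerivAt_const s (lam * c₂)).div (hDd s) hne
    refine h.congr_deriv (Eq.symm ?_)
    simp only [hD]
    have hD3 : c₁ + r * Real.cosh (lam * s + c₃) ≠ 0 := by rwa [mul_comm]
    field_simp
    ring
  · simp only [hD]
    set C := Real.cosh (lam * s + c₃)
    set S := Real.sinh (lam * s + c₃)
    rw [div_pow, div_pow, div_pow, ← add_div, ← add_div,
      div_eq_one_iff_eq hd2]
    field_simp
    linear_combination (S ^ 2 + c₂ ^ 2) * hl2 + (r ^ 2 - 1) * hc + (-(r ^ 2) + 1) * hS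
end

section
/- Let r > 1 and set λ = √(r² − 1)/r. Suppose differentiable functions v¹, v², v³ : ℝ → ℝ solve the circular-tractrix ODE system with parameter r and satisfy (v¹(s))² + (v²(s))² + (v³(s))² = 1 for all s ∈ ℝ. Then either there exist constants c₁, c₂, c₃ ∈ ℝ with c₁² + c₂² = 1 such that for all s: v¹(s) = −λ·sinh(λs + c₃)/D(s), v²(s) = (c₁ + (1/r)·cosh(λs + c₃))/D(s), v³(s) = λ·c₂/D(s) with D(s) = c₁/r + cosh(λs + c₃); or there exists ε ∈ {1, −1} such that v¹ ≡ ε·√(r² − 1)/r, v² ≡ 1/r, v³ ≡ 0. -/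
/-- Solutions of `W'' = lam² W` are combinations of `cosh` and `sinh`. -/
lemma hyp_ode (lam : ℝ) (hl : lam ≠ 0) (W W' : ℝ → ℝ)
    (hW : ∀ s, HasDerivAt W (W' s) s)
    (hW' : ∀ s, HasDerivAt W' (lam ^ 2 * W s) s) :
    ∀ s, W s = W 0 * Real.cosh (lam * s) + (W' 0 / lam) * Real.sinh (lam * s) := by
  have hcosh : ∀ s : ℝ, HasDerivAt (fun u => Real.cosh (lam * u))
      (Real.sinh (lam * s) * lam) s := by
    intro s
    exact HasDerivAt.cosh (by simpa using (hasDerivAt_id s).const_mul lam)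
  have hsinh : ∀ s : ℝ, HasDerivAt (fun u => Real.sinh (lam * u))
      (Real.cosh (lam * s) * lam) s := by
    intro s
    exact HasDerivAt.sinh (by simpa using (hasDerivAt_id s).const_mul lam)
  have hP : ∀ s : ℝ, HasDerivAt
      (fun u => W' u * Real.cosh (lam * u) - lam * (W u * Real.sinh (lam * u))) 0 s := by
    intro s
    have h := ((hW' s).mul (hcosh s)).sub (((hW s).mul (hsinh s)).const_mul lam)
    exact h.congr_deriv (by ring)
  have hQ : ∀ s : ℝ, HasDerivAt
      (fun u => lam * (W u * Real.cosh (lam * u)) - W' u * Real.sinh (lam * u)) 0 s := by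
    intro s
    have h := (((hW s).mul (hcosh s)).const_mul lam).sub ((hW' s).mul (hsinh s))
    exact h.congr_deriv (by ring)
  have hPc : ∀ s : ℝ, W' s * Real.cosh (lam * s) - lam * (W s * Real.sinh (lam * s))
      = W' 0 := by
    intro s
    have h := is_const_of_deriv_eq_zero (f := fun u =>
        W' u * Real.cosh (lam * u) - lam * (W u * Real.sinh (lam * u)))
      (fun y => ((hP y).differentiableAt)) (fun y => (hP y).deriv) s 0
    simpa using h
  have hQc : ∀ s : ℝ, lam * (W s * Real.cosh (lam * s)) - W' s * Real.sinh (lam * s)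
      = lam * W 0 := by
    intro s
    have h := is_const_of_deriv_eq_zero (f := fun u =>
        lam * (W u * Real.cosh (lam * u)) - W' u * Real.sinh (lam * u))
      (fun y => ((hQ y).differentiableAt)) (fun y => (hQ y).deriv) s 0
    simpa using h
  intro s
  have hpyth := Real.cosh_sq_sub_sinh_sq (lam * s)
  have hmain : lam * W s = lam * W 0 * Real.cosh (lam * s) + W' 0 * Real.sinh (lam * s) := by
    linear_combination Real.cosh (lam * s) * hQc s + Real.sinh (lam * s) * hPc s -
      lam * W s * hpyth
  apply mul_left_cancel₀ hl
  rw [hmain]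
  field_simp

theorem stmt2 (r lam : ℝ) (hr : 1 < r) (hlam : lam = Real.sqrt (r ^ 2 - 1) / r)
    (v1 v2 v3 : ℝ → ℝ)
    (hsol : SolvesCircularTractrix r v1 v2 v3)
    (hunit : ∀ s : ℝ, (v1 s) ^ 2 + (v2 s) ^ 2 + (v3 s) ^ 2 = 1) :
    (∃ c₁ c₂ c₃ : ℝ, c₁ ^ 2 + c₂ ^ 2 = 1 ∧ ∀ s : ℝ,
      v1 s = -(lam * Real.sinh (lam * s + c₃)) / (c₁ / r + Real.cosh (lam * s + c₃)) ∧
      v2 s = (c₁ + (1 / r) * Real.cosh (lam * s + c₃)) / (c₁ / r + Real.cosh (lam * s + c₃)) ∧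
      v3 s = lam * c₂ / (c₁ / r + Real.cosh (lam * s + c₃))) ∨
    (∃ ε : ℝ, (ε = 1 ∨ ε = -1) ∧ ∀ s : ℝ,
      v1 s = ε * Real.sqrt (r ^ 2 - 1) / r ∧ v2 s = 1 / r ∧ v3 s = 0) := by
  obtain ⟨h1, h2, h3⟩ := hsol
  have hr0 : (0:ℝ) < r := lt_trans one_pos hr
  have hr2 : (0:ℝ) < r ^ 2 - 1 := by nlinarith
  have hlampos : 0 < lam := by
    rw [hlam]; exact div_pos (Real.sqrt_pos.mpr hr2) hr0
  have hlamne : lam ≠ 0 := ne_of_gt hlampos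
  have hlamsq : lam ^ 2 = 1 - 1 / r ^ 2 := by
    rw [hlam, div_pow, Real.sq_sqrt hr2.le]
    field_simp
  have hlr : lam ^ 2 * r ^ 2 = r ^ 2 - 1 := by
    rw [hlamsq]; field_simp
  have hv1c : Continuous v1 := by
    rw [continuous_iff_continuousAt]
    exact fun s => (h1 s).continuousAt
  set D : ℝ → ℝ := fun s => Real.exp (-∫ t in (0:ℝ)..s, v1 t) with hDdef
  have hDpos : ∀ s, 0 < D s := fun s => Real.exp_pos _
  have hD0 : D 0 = 1 := by simp [hDdef]
  have hD : ∀ s, HasDerivAt D (-v1 s * D s) s := by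
    intro s
    have hI : HasDerivAt (fun u => ∫ t in (0:ℝ)..u, v1 t) (v1 s) s :=
      intervalIntegral.integral_hasDerivAt_right (hv1c.intervalIntegrable _ _)
        hv1c.aestronglyMeasurable.stronglyMeasurableAtFilter hv1c.continuousAt
    have h := (hI.neg).exp
    simp only [hDdef]
    exact h.congr_deriv (by simp only [Pi.neg_apply]; ring)
  set a : ℝ := v2 0 - 1 / r with ha_def
  set b : ℝ := v3 0 with hb_def
  have hA : ∀ s, (v2 s - 1 / r) * D s = a := by
    intro s
    have hconst : ∀ x : ℝ, HasDerivAt (fun u => (v2 u - 1 / r) * D u) 0 x := by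
      intro x
      have h := ((h2 x).sub_const (1 / r)).mul (hD x)
      exact h.congr_deriv (by ring)
    have h := is_const_of_deriv_eq_zero (f := fun u => (v2 u - 1 / r) * D u)
      (fun y => (hconst y).differentiableAt) (fun y => (hconst y).deriv) s 0
    rw [h, hD0, mul_one]
  have hB : ∀ s, v3 s * D s = b := by
    intro s
    have hconst : ∀ x : ℝ, HasDerivAt (fun u => v3 u * D u) 0 x := by
      intro x
      have h := (h3 x).mul (hD x)
      exact h.congr_deriv (by ring)
    have h := is_const_of_deriv_eq_zero (f := fun u => v3 u * D u)
      (fun y => (hconst y).differentiableAt) (fun y => (hconst y).deriv) s 0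
    rw [h, hD0, mul_one]
  by_cases hab : a = 0 ∧ b = 0
  · -- trivial case
    right
    obtain ⟨ha, hb⟩ := hab
    have hv2 : ∀ s, v2 s = 1 / r := by
      intro s
      have h := hA s
      rw [ha] at h
      rcases mul_eq_zero.mp h with h' | h'
      · linarith [sub_eq_zero.mp h']
      · exact absurd h' (hDpos s).ne'
    have hv3 : ∀ s, v3 s = 0 := by
      intro s
      have h := hB s
      rw [hb] at h
      rcases mul_eq_zero.mp h with h' | h'
      · exact h'
      · exact absurd h' (hDpos s).ne'
    have hsq : ∀ s, v1 s ^ 2 = lam ^ 2 := by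
      intro s
      have h := hunit s
      rw [hv2 s, hv3 s] at h
      rw [hlamsq]
      have hx : (1 / r) ^ 2 = 1 / r ^ 2 := by ring
      linarith [h, hx]
    have hval : ∀ s, v1 s = lam ∨ v1 s = -lam := by
      intro s
      have h : (v1 s - lam) * (v1 s + lam) = 0 := by linear_combination hsq s
      rcases mul_eq_zero.mp h with h' | h'
      · left; linarith
      · right; linarith
    have hconstv1 : ∀ s, v1 s = v1 0 := by
      intro s
      by_contra hne
      have h0 : (0:ℝ) ∈ Set.uIcc (v1 0) (v1 s) := by
        rcases hval 0 with h0' | h0' <;> rcases hval s with hs' | hs'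
        · exact absurd (hs'.trans h0'.symm) hne
        · rw [h0', hs', Set.mem_uIcc]
          right
          constructor <;> linarith
        · rw [h0', hs', Set.mem_uIcc]
          left
          constructor <;> linarith
        · exact absurd (hs'.trans h0'.symm) hne
      have := intermediate_value_uIcc (a := (0:ℝ)) (b := s) (hv1c.continuousOn)
      obtain ⟨t, _, ht⟩ := this h0
      have := hsq t
      rw [ht] at this
      nlinarith only [this, hlampos]
    rcases hval 0 with h0' | h0'
    · refine ⟨1, Or.inl rfl, fun s => ⟨?_, hv2 s, hv3 s⟩⟩
      rw [hconstv1 s, h0', hlam]; ring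
    · refine ⟨-1, Or.inr rfl, fun s => ⟨?_, hv2 s, hv3 s⟩⟩
      rw [hconstv1 s, h0', hlam]; ring
  · -- generic case
    left
    set m : ℝ := a / (r * lam ^ 2) with hm_def
    have hm : lam ^ 2 * m = a * (1 / r) := by
      rw [hm_def]; field_simp
    have hW' : ∀ s, HasDerivAt (fun u => -v1 u * D u) (lam ^ 2 * (D s - m)) s := by
      intro s
      have h := ((h1 s).neg).mul (hD s)
      refine h.congr_deriv ?_
      simp only [Pi.neg_apply]
      linear_combination -((D s) * hlamsq - hm + (1 / r) * hA s)
    have hWd : ∀ s, HasDerivAt (fun u => D u - m) (-v1 s * D s) s :=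
      fun s => (hD s).sub_const m
    have hDform := hyp_ode lam hlamne (fun u => D u - m) (fun u => -v1 u * D u) hWd hW'
    set α : ℝ := 1 - m with hα_def
    set β : ℝ := -v1 0 / lam with hβ_def
    have hDs : ∀ s, D s = m + α * Real.cosh (lam * s) + β * Real.sinh (lam * s) := by
      intro s
      have h := hDform s
      simp only [hD0] at h
      rw [hα_def, hβ_def]
      linear_combination h
    -- key invariant
    have hα : r * lam ^ 2 * α = r * lam ^ 2 - a := by
      rw [hα_def, hm_def]; field_simp
    have hα2 : r ^ 2 * lam ^ 4 * α ^ 2 = (r * lam ^ 2 - a) ^ 2 := by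
      linear_combination (r * lam ^ 2 * α + r * lam ^ 2 - a) * hα
    have hβ2 : lam ^ 2 * β ^ 2 = (v1 0) ^ 2 := by
      rw [hβ_def]; field_simp
    have hv : r * v2 0 = r * a + 1 := by
      rw [ha_def]; field_simp; ring
    have h0' : (v1 0) ^ 2 + (v2 0) ^ 2 + b ^ 2 = 1 := by
      rw [hb_def]; exact hunit 0
    have hkeyr : r ^ 2 * lam ^ 4 * α ^ 2 - r ^ 2 * lam ^ 4 * β ^ 2
        = r ^ 2 * a ^ 2 + r ^ 2 * lam ^ 2 * b ^ 2 := by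
      linear_combination hα2 - r ^ 2 * lam ^ 2 * hβ2 - r ^ 2 * lam ^ 2 * h0'
        + lam ^ 2 * (r * v2 0 + r * a + 1) * hv + (lam ^ 2 + a ^ 2) * hlr
    have hkey : lam ^ 4 * (α ^ 2 - β ^ 2) = a ^ 2 + lam ^ 2 * b ^ 2 := by
      have hr2ne : (r:ℝ) ^ 2 ≠ 0 := pow_ne_zero 2 hr0.ne'
      apply mul_left_cancel₀ hr2ne
      linear_combination hkeyr
    have habpos : 0 < a ^ 2 + b ^ 2 := by
      rcases not_and_or.mp hab with h | h
      · have := sq_pos_of_ne_zero h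
        linarith only [this, sq_nonneg b]
      · have := sq_pos_of_ne_zero h
        linarith only [this, sq_nonneg a]
    have hlam2lt : lam ^ 2 < 1 := by
      rw [hlamsq]
      have : 0 < 1 / r ^ 2 := by positivity
      linarith only [this, hlamsq]
    have hpos2 : 0 < a ^ 2 + lam ^ 2 * b ^ 2 := by
      have p1 : 0 ≤ (1 - lam ^ 2) * a ^ 2 :=
        mul_nonneg (by linarith only [hlam2lt]) (sq_nonneg a)
      linarith only [p1, mul_pos (pow_pos hlampos 2) habpos]
    have hαβ : β ^ 2 < α ^ 2 := by
      by_contra hcon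
      push_neg at hcon
      have hnp : lam ^ 4 * (α ^ 2 - β ^ 2) ≤ 0 :=
        mul_nonpos_of_nonneg_of_nonpos (by positivity) (by linarith only [hcon])
      linarith only [hnp, hkey, hpos2]
    -- α > 0
    have hαpos : 0 < α := by
      by_contra hc
      push_neg at hc
      have hαne : α ≠ 0 := by
        intro h
        rw [h] at hαβ
        linarith only [hαβ, sq_nonneg β]
      have hαneg : α < 0 := lt_of_le_of_ne hc hαne
      have h1' : α + β < 0 := by nlinarith only [hαβ, hαneg]
      have h2' : α - β < 0 := by nlinarith only [hαβ, hαneg]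
      set T : ℝ := -(α + β) / 2 with hT_def
      have hT : 0 < T := by rw [hT_def]; linarith
      set M : ℝ := max 1 ((|m| + 1) / T) with hM_def
      have hM1 : (1:ℝ) ≤ M := le_max_left _ _
      have hM2 : (|m| + 1) / T ≤ M := le_max_right _ _
      have hMpos : 0 < M := lt_of_lt_of_le one_pos hM1
      set s : ℝ := Real.log M / lam with hs_def
      have hexp : Real.exp (lam * s) = M := by
        rw [hs_def, mul_div_cancel₀ _ hlamne, Real.exp_log hMpos]
      have hDval := hDs s
      rw [Real.cosh_eq, Real.sinh_eq, hexp] at hDval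
      have hepos : 0 < Real.exp (-(lam * s)) := Real.exp_pos _
      have hTM : |m| + 1 ≤ T * M := by
        rw [← div_le_iff₀' hT]
        exact hM2
      have habs : m ≤ |m| := le_abs_self m
      have hDneg : D s < 0 := by
        have e1 : (α - β) / 2 * Real.exp (-(lam * s)) < 0 :=
          mul_neg_of_neg_of_pos (div_neg_of_neg_of_pos h2' two_pos) hepos
        have e2 : (α + β) / 2 * M = -(T * M) := by rw [hT_def]; ring
        rw [hDval]
        nlinarith only [e1, e2, hTM, habs]
      exact absurd (hDpos s) (not_lt.mpr hDneg.le)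
    have hsum : 0 < α + β := by nlinarith only [hαβ, hαpos]
    set k : ℝ := Real.sqrt (α ^ 2 - β ^ 2) with hk_def
    have hkpos : 0 < k := Real.sqrt_pos.mpr (by linarith)
    have hk2 : k ^ 2 = α ^ 2 - β ^ 2 := Real.sq_sqrt (by linarith)
    set c₃ : ℝ := Real.log ((α + β) / k) with hc3_def
    have hec : Real.exp c₃ = (α + β) / k := by
      rw [hc3_def, Real.exp_log (div_pos hsum hkpos)]
    have hecn : Real.exp (-c₃) = k / (α + β) := by
      rw [Real.exp_neg, hec, inv_div]
    have hcoshc : Real.cosh c₃ = α / k := by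
      rw [Real.cosh_eq, hec, hecn]
      rw [div_add_div _ _ (ne_of_gt hkpos) (ne_of_gt hsum)]
      rw [div_div, div_eq_div_iff (by positivity) (ne_of_gt hkpos)]
      linear_combination k * hk2
    have hsinhc : Real.sinh c₃ = β / k := by
      rw [Real.sinh_eq, hec, hecn]
      rw [div_sub_div _ _ (ne_of_gt hkpos) (ne_of_gt hsum)]
      rw [div_div, div_eq_div_iff (by positivity) (ne_of_gt hkpos)]
      linear_combination -(k * hk2)
    set c₁ : ℝ := a / (k * lam ^ 2) with hc1_def
    set c₂ : ℝ := b / (k * lam) with hc2_def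
    have hkc1 : a = k * lam ^ 2 * c₁ := by
      rw [hc1_def]; field_simp
    have hkc2 : b = k * lam * c₂ := by
      rw [hc2_def]; field_simp
    have hc12 : c₁ ^ 2 + c₂ ^ 2 = 1 := by
      have hk4 : k ^ 2 * lam ^ 4 = a ^ 2 + lam ^ 2 * b ^ 2 := by
        rw [hk2]; linear_combination hkey
      rw [hc1_def, hc2_def]
      field_simp
      linear_combination (-1) * hk4
    refine ⟨c₁, c₂, c₃, hc12, fun s => ?_⟩
    have hDen : c₁ / r + Real.cosh (lam * s + c₃) = D s / k := by
      rw [Real.cosh_add, hcoshc, hsinhc, hDs s, hc1_def, hm_def]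
      field_simp
      ring
    have hDenpos : 0 < c₁ / r + Real.cosh (lam * s + c₃) := by
      rw [hDen]; positivity
    have hDval : D s = k * (c₁ / r + Real.cosh (lam * s + c₃)) := by
      rw [hDen, mul_div_cancel₀ _ (ne_of_gt hkpos)]
    have hDer2 : HasDerivAt D (k * lam * Real.sinh (lam * s + c₃)) s := by
      have hh : HasDerivAt (fun u => m + α * Real.cosh (lam * u) + β * Real.sinh (lam * u))
          (α * (Real.sinh (lam * s) * lam) + β * (Real.cosh (lam * s) * lam)) s := by
        have hc := HasDerivAt.cosh (x := s) (f := fun u => lam * u) (f' := lam)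
          (by simpa using (hasDerivAt_id s).const_mul lam)
        have hs' := HasDerivAt.sinh (x := s) (f := fun u => lam * u) (f' := lam)
          (by simpa using (hasDerivAt_id s).const_mul lam)
        exact ((hc.const_mul α).const_add m).add (hs'.const_mul β) |>.congr_deriv (by ring)
      have heq : D = fun u => m + α * Real.cosh (lam * u) + β * Real.sinh (lam * u) :=
        funext fun u => hDs u
      rw [heq]
      convert hh using 1
      rw [Real.sinh_add, hcoshc, hsinhc]
      field_simp
    have hv1D : -v1 s * D s = k * lam * Real.sinh (lam * s + c₃) := (hD s).unique hDer2
    refine ⟨?_, ?_, ?_⟩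
    · rw [eq_div_iff (ne_of_gt hDenpos)]
      rw [hDval] at hv1D
      apply mul_left_cancel₀ (ne_of_gt hkpos)
      linear_combination -hv1D
    · rw [eq_div_iff (ne_of_gt hDenpos)]
      have hAs := hA s
      rw [hDval, hkc1] at hAs
      apply mul_left_cancel₀ (ne_of_gt hkpos)
      linear_combination hAs + k * c₁ * hlamsq
    · rw [eq_div_iff (ne_of_gt hDenpos)]
      have hBs := hB s
      rw [hDval, hkc2] at hBs
      apply mul_left_cancel₀ (ne_of_gt hkpos)
      linear_combination hBs
end

section
/- Let c₂, c₃ ∈ ℝ and set c₁ = 1 + c₂². Define Q(s) = c₁ + (s + c₃)² and v¹(s) = −2(s + c₃)/Q(s), v²(s) = 1 − 2/Q(s), v³(s) = 2c₂/Q(s). Then Q(s) > 0 for every s ∈ ℝ, and (v¹, v², v³) solves the circular-tractrix ODE system with parameter r = 1, including the unit-length constraint (v¹(s))² + (v²(s))² + (v³(s))² = 1 for all s ∈ ℝ. -/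
theorem stmt3 (c₁ c₂ c₃ : ℝ) (hc₁ : c₁ = 1 + c₂ ^ 2)
    (Q v1 v2 v3 : ℝ → ℝ)
    (hQ : ∀ s, Q s = c₁ + (s + c₃) ^ 2)
    (hv1 : ∀ s, v1 s = -(2 * (s + c₃)) / Q s)
    (hv2 : ∀ s, v2 s = 1 - 2 / Q s)
    (hv3 : ∀ s, v3 s = 2 * c₂ / Q s) :
    (∀ s : ℝ, 0 < Q s) ∧
    SolvesCircularTractrix 1 v1 v2 v3 ∧
    (∀ s : ℝ, (v1 s) ^ 2 + (v2 s) ^ 2 + (v3 s) ^ 2 = 1) := by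
  have hQpos : ∀ s, 0 < Q s := fun s => by rw [hQ, hc₁]; positivity
  have hQne : ∀ s, Q s ≠ 0 := fun s => (hQpos s).ne'
  have hQd : ∀ s : ℝ, HasDerivAt Q (2 * (s + c₃)) s := by
    intro s
    have h1 : HasDerivAt (fun s : ℝ => s + c₃) 1 s :=
      (hasDerivAt_id s).add_const c₃
    have h2 : HasDerivAt (fun s : ℝ => c₁ + (s + c₃) ^ 2) (2 * (s + c₃)) s := by
      simpa using (h1.pow 2).const_add c₁
    exact h2.congr_of_eventuallyEq (Filter.Eventually.of_forall fun x => hQ x)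
  refine ⟨hQpos, ⟨?_, ?_, ?_⟩, ?_⟩
  · intro s
    have h : HasDerivAt (fun s => -(2 * (s + c₃)) / Q s)
        (((-2) * Q s - (-(2 * (s + c₃))) * (2 * (s + c₃))) / (Q s) ^ 2) s := by
      have hn : HasDerivAt (fun s : ℝ => -(2 * (s + c₃))) (-2) s := by
        have h1 : HasDerivAt (fun s : ℝ => s + c₃) 1 s := (hasDerivAt_id s).add_const c₃
        simpa using ((h1.const_mul 2).fun_neg)
      exact hn.div (hQd s) (hQne s)
    have h' : HasDerivAt v1 (((-2) * Q s - (-(2 * (s + c₃))) * (2 * (s + c₃))) / (Q s) ^ 2) s :=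
      h.congr_of_eventuallyEq (by filter_upwards with x; rw [hv1])
    convert h' using 1
    rw [hv1, hv2, hQ, hc₁]
    field_simp
    ring
  · intro s
    have h : HasDerivAt (fun s => 1 - 2 / Q s) (-((0 * Q s - 2 * (2 * (s + c₃))) / (Q s) ^ 2)) s := by
      have := ((hasDerivAt_const s (2:ℝ)).div (hQd s) (hQne s)).const_sub 1
      simpa using this
    have h' : HasDerivAt v2 (-((0 * Q s - 2 * (2 * (s + c₃))) / (Q s) ^ 2)) s :=
      h.congr_of_eventuallyEq (by filter_upwards with x; rw [hv2])
    convert h' using 1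
    rw [hv1, hv2, hQ, hc₁]
    field_simp
    ring
  · intro s
    have h : HasDerivAt (fun s => 2 * c₂ / Q s) ((0 * Q s - 2 * c₂ * (2 * (s + c₃))) / (Q s) ^ 2) s :=
      (hasDerivAt_const s (2 * c₂)).div (hQd s) (hQne s)
    have h' : HasDerivAt v3 ((0 * Q s - 2 * c₂ * (2 * (s + c₃))) / (Q s) ^ 2) s :=
      h.congr_of_eventuallyEq (by filter_upwards with x; rw [hv3])
    convert h' using 1
    rw [hv1, hv3, hQ, hc₁]
    field_simp
    ring
  · intro s
    rw [hv1, hv2, hv3, hQ, hc₁]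
    have : (1 + c₂ ^ 2 + (s + c₃) ^ 2) ≠ 0 := by positivity
    field_simp
    ring
end

section
/- Suppose differentiable functions v¹, v², v³ : ℝ → ℝ solve the circular-tractrix ODE system with parameter r = 1 and satisfy (v¹(s))² + (v²(s))² + (v³(s))² = 1 for all s ∈ ℝ. Then either there exist constants c₂, c₃ ∈ ℝ such that, with c₁ = 1 + c₂² and Q(s) = c₁ + (s + c₃)², one has v¹(s) = −2(s + c₃)/Q(s), v²(s) = 1 − 2/Q(s), v³(s) = 2c₂/Q(s) for all s; or v¹ ≡ 0, v² ≡ 1, v³ ≡ 0. -/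
theorem stmt5 (v1 v2 v3 : ℝ → ℝ)
    (hsol : SolvesCircularTractrix 1 v1 v2 v3)
    (hunit : ∀ s : ℝ, (v1 s) ^ 2 + (v2 s) ^ 2 + (v3 s) ^ 2 = 1) :
    (∃ c₂ c₃ : ℝ, ∀ s : ℝ,
      v1 s = -(2 * (s + c₃)) / ((1 + c₂ ^ 2) + (s + c₃) ^ 2) ∧
      v2 s = 1 - 2 / ((1 + c₂ ^ 2) + (s + c₃) ^ 2) ∧
      v3 s = 2 * c₂ / ((1 + c₂ ^ 2) + (s + c₃) ^ 2)) ∨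
    (∀ s : ℝ, v1 s = 0 ∧ v2 s = 1 ∧ v3 s = 0) := by
  obtain ⟨h1, h2, h3⟩ := hsol
  set w : ℝ → ℝ := fun s => 1 - v2 s with hwdef
  have hw : ∀ s, HasDerivAt w (v1 s * w s) s := by
    intro s
    have h := (hasDerivAt_const s (1:ℝ)).sub (h2 s)
    refine h.congr_deriv ?_
    simp only [hwdef]
    ring
  have hwnonneg : ∀ s, 0 ≤ w s := by
    intro s
    have := hunit s
    simp only [hwdef]
    nlinarith [sq_nonneg (v1 s), sq_nonneg (v3 s), sq_nonneg (1 + v2 s)]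
  have hc1 : Continuous v1 := by
    rw [continuous_iff_continuousAt]; exact fun s => (h1 s).continuousAt
  set V : ℝ → ℝ := fun s => ∫ t in (0:ℝ)..s, v1 t with hVdef
  have hV : ∀ s, HasDerivAt V (v1 s) s := fun s =>
    (hc1.integral_hasStrictDerivAt 0 s).hasDerivAt
  set g : ℝ → ℝ := fun s => w s * Real.exp (-V s) with hgdef
  have hg : ∀ s, HasDerivAt g 0 s := by
    intro s
    have h := (hw s).mul ((hV s).neg.exp)
    refine h.congr_deriv ?_
    ring
  have hgconst : ∀ s, g s = g 0 := fun s =>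
    is_const_of_deriv_eq_zero (fun x => (hg x).differentiableAt)
      (fun x => (hg x).deriv) s 0
  by_cases h0 : v2 0 = 1
  · right
    intro s
    have hws : w s = 0 := by
      have hc := hgconst s
      have hg0 : g 0 = 0 := by simp [hgdef, hwdef, h0]
      rw [hg0] at hc
      have hexp : Real.exp (-V s) ≠ 0 := (Real.exp_pos _).ne'
      exact (mul_eq_zero.mp hc).resolve_right hexp
    have hv2 : v2 s = 1 := by
      simp only [hwdef] at hws; linarith
    refine ⟨?_, hv2, ?_⟩ <;>
      nlinarith [hunit s, sq_nonneg (v1 s), sq_nonneg (v3 s)]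
  · left
    have hw0 : 0 < w 0 := by
      refine (hwnonneg 0).lt_of_ne fun h => h0 ?_
      simp only [hwdef] at h; linarith
    have hwpos : ∀ s, 0 < w s := by
      intro s
      have hc : (0:ℝ) < w s * Real.exp (-V s) := by
        rw [show w s * Real.exp (-V s) = g s from rfl, hgconst s]
        exact mul_pos hw0 (Real.exp_pos _)
      nlinarith [Real.exp_pos (-V s)]
    set u : ℝ → ℝ := fun s => v1 s / w s with hudef
    set t3 : ℝ → ℝ := fun s => v3 s / w s with ht3def
    have hu : ∀ s, HasDerivAt u (-1) s := by
      intro s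
      have hws := (hwpos s).ne'
      have h := (h1 s).div (hw s) hws
      refine h.congr_deriv (Eq.symm ?_)
      rw [eq_div_iff (pow_ne_zero 2 hws)]
      simp only [hwdef]
      ring
    have ht3 : ∀ s, HasDerivAt t3 0 s := by
      intro s
      have hws := (hwpos s).ne'
      have h := (h3 s).div (hw s) hws
      refine h.congr_deriv (Eq.symm ?_)
      rw [eq_div_iff (pow_ne_zero 2 hws)]
      ring
    have huconst : ∀ s, u s + s = u 0 + 0 := by
      have hd : ∀ x, HasDerivAt (fun s => u s + s) 0 x := by
        intro x
        have := (hu x).add (hasDerivAt_id x)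
        exact this.congr_deriv (by norm_num)
      exact fun s => is_const_of_deriv_eq_zero (fun x => (hd x).differentiableAt)
        (fun x => (hd x).deriv) s 0
    have ht3const : ∀ s, t3 s = t3 0 := fun s =>
      is_const_of_deriv_eq_zero (fun x => (ht3 x).differentiableAt)
        (fun x => (ht3 x).deriv) s 0
    refine ⟨t3 0, -(u 0), fun s => ?_⟩
    have hws := (hwpos s).ne'
    have e1 : v1 s = u s * w s := (div_mul_cancel₀ _ hws).symm
    have e2 : v3 s = t3 s * w s := (div_mul_cancel₀ _ hws).symm
    have ev2 : v2 s = 1 - w s := by simp only [hwdef]; ring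
    have hkey : w s * ((u s) ^ 2 + (t3 s) ^ 2 + 1) = 2 := by
      have hk2 : w s * (w s * ((u s) ^ 2 + (t3 s) ^ 2 + 1)) = w s * 2 := by
        have hun := hunit s
        rw [e1, e2, ev2] at hun
        linear_combination hun
      exact mul_left_cancel₀ hws hk2
    have hus : u s = -(s + -(u 0)) := by
      have := huconst s; linarith
    have hQpos : (0:ℝ) < (1 + (t3 0) ^ 2) + (s + -(u 0)) ^ 2 := by positivity
    have hQeq : (u s) ^ 2 + (t3 s) ^ 2 + 1 = (1 + (t3 0) ^ 2) + (s + -(u 0)) ^ 2 := by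
      rw [ht3const s, hus]; ring
    have hwval : w s = 2 / ((1 + (t3 0) ^ 2) + (s + -(u 0)) ^ 2) := by
      rw [eq_div_iff hQpos.ne', ← hQeq, hkey]
    refine ⟨?_, ?_, ?_⟩
    · rw [e1, hus, hwval]; ring
    · rw [ev2, hwval]
    · rw [e2, ht3const s, hwval]; ring
end

section
/- Let 0 < r < 1, set λ = √(1 − r²)/r, and let c₁, c₂, c₃ ∈ ℝ satisfy c₁² − c₂² = 1. Define D(s) = c₁/r + cos(λs + c₃) and v¹(s) = λ·sin(λs + c₃)/D(s), v²(s) = (c₁ + (1/r)·cos(λs + c₃))/D(s), v³(s) = λ·c₂/D(s). Then D(s) ≠ 0 for every s ∈ ℝ (since |c₁|/r > 1), and (v¹, v², v³) solves the circular-tractrix ODE system with parameter r, including the unit-length constraint (v¹(s))² + (v²(s))² + (v³(s))² = 1 for all s ∈ ℝ. -/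
theorem stmt6 (r c₁ c₂ c₃ lam : ℝ) (hr0 : 0 < r) (hr1 : r < 1)
    (hc : c₁ ^ 2 - c₂ ^ 2 = 1)
    (hlam : lam = Real.sqrt (1 - r ^ 2) / r)
    (D v1 v2 v3 : ℝ → ℝ)
    (hD : ∀ s, D s = c₁ / r + Real.cos (lam * s + c₃))
    (hv1 : ∀ s, v1 s = lam * Real.sin (lam * s + c₃) / D s)
    (hv2 : ∀ s, v2 s = (c₁ + (1 / r) * Real.cos (lam * s + c₃)) / D s)
    (hv3 : ∀ s, v3 s = lam * c₂ / D s) :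
    (∀ s : ℝ, D s ≠ 0) ∧
    SolvesCircularTractrix r v1 v2 v3 ∧
    (∀ s : ℝ, (v1 s) ^ 2 + (v2 s) ^ 2 + (v3 s) ^ 2 = 1) := by
  have hr : r ≠ 0 := ne_of_gt hr0
  have hlam2 : r ^ 2 * lam ^ 2 = 1 - r ^ 2 := by
    rw [hlam, div_pow, Real.sq_sqrt (by nlinarith)]
    field_simp
  have hc1 : 1 ≤ |c₁| := by nlinarith [abs_nonneg c₁, sq_abs c₁]
  have hDne : ∀ s : ℝ, D s ≠ 0 := by
    intro s hzero
    rw [hD s] at hzero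
    have h1 := Real.neg_one_le_cos (lam * s + c₃)
    have h2 := Real.cos_le_one (lam * s + c₃)
    rcases abs_cases c₁ with ⟨he, _⟩ | ⟨he, _⟩
    · have : c₁ / r > 1 := by
        rw [gt_iff_lt, lt_div_iff₀ hr0]; nlinarith
      nlinarith
    · have : c₁ / r < -1 := by
        rw [div_lt_iff₀ hr0]; nlinarith
      nlinarith
  have hne' : ∀ s : ℝ, c₁ + Real.cos (lam * s + c₃) * r ≠ 0 := by
    intro s h
    apply hDne s
    rw [hD s]
    field_simp
    linarith
  have hθ : ∀ s : ℝ, HasDerivAt (fun s : ℝ => lam * s + c₃) lam s := by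
    intro s
    simpa using ((hasDerivAt_id s).const_mul lam).add_const c₃
  have hcos : ∀ s : ℝ, HasDerivAt (fun s : ℝ => Real.cos (lam * s + c₃))
      (-Real.sin (lam * s + c₃) * lam) s := fun s => (Real.hasDerivAt_cos _).comp s (hθ s)
  have hDd : ∀ s : ℝ, HasDerivAt D (-Real.sin (lam * s + c₃) * lam) s := by
    intro s
    rw [funext hD]
    exact (hcos s).const_add (c₁ / r)
  refine ⟨hDne, ⟨?_, ?_, ?_⟩, ?_⟩
  · intro s
    have hne := hDne s
    have hsin : HasDerivAt (fun s : ℝ => Real.sin (lam * s + c₃))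
        (Real.cos (lam * s + c₃) * lam) s := (Real.hasDerivAt_sin _).comp s (hθ s)
    have hdiv := (hsin.const_mul lam).div (hDd s) hne
    have key : HasDerivAt v1 ((lam * (Real.cos (lam * s + c₃) * lam) * D s -
        lam * Real.sin (lam * s + c₃) * (-Real.sin (lam * s + c₃) * lam)) / D s ^ 2) s := by
      rw [funext hv1]; exact hdiv
    convert key using 1
    rw [hv1 s, hv2 s, hD s]
    field_simp [show c₁ + r * Real.cos (lam * s + c₃) ≠ 0 by rw [mul_comm r]; exact hne' s]
    linear_combination (-(Real.cos (lam * s + c₃) * (c₁ + r * Real.cos (lam * s + c₃)))) * hlam2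
  · intro s
    have hne := hDne s
    have hnum : HasDerivAt (fun s : ℝ => c₁ + 1 / r * Real.cos (lam * s + c₃))
        (1 / r * (-Real.sin (lam * s + c₃) * lam)) s := ((hcos s).const_mul (1 / r)).const_add c₁
    have hdiv := hnum.div (hDd s) hne
    have key : HasDerivAt v2 ((1 / r * (-Real.sin (lam * s + c₃) * lam) * D s -
        (c₁ + 1 / r * Real.cos (lam * s + c₃)) * (-Real.sin (lam * s + c₃) * lam)) / D s ^ 2) s := by
      rw [funext hv2]; exact hdiv
    convert key using 1
    rw [hv1 s, hv2 s, hD s]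
    field_simp [hne' s]
    ring
  · intro s
    have hne := hDne s
    have hdiv := (hasDerivAt_const s (lam * c₂)).div (hDd s) hne
    have key : HasDerivAt v3 ((0 * D s -
        lam * c₂ * (-Real.sin (lam * s + c₃) * lam)) / D s ^ 2) s := by
      rw [funext hv3]; exact hdiv
    convert key using 1
    rw [hv1 s, hv3 s, hD s]
    field_simp [hne' s]
    ring
  · intro s
    rw [hv1 s, hv2 s, hv3 s, hD s]
    have hpy := Real.sin_sq_add_cos_sq (lam * s + c₃)
    field_simp [show c₁ + r * Real.cos (lam * s + c₃) ≠ 0 by rw [mul_comm r]; exact hne' s]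
    linear_combination (1 - r ^ 2) * hpy +
      (Real.sin (lam * s + c₃) ^ 2 + c₂ ^ 2) * hlam2 + (r ^ 2 - 1) * hc
end

section
/- Let n ≥ 2, let A : ℝ → Matrix (Fin n) (Fin n) ℝ be a continuous function taking values in skew-symmetric matrices, and let v : ℝ → ℝⁿ be a differentiable function satisfying v′(s) = A(s)·v(s) − e₁ + v¹(s)·v(s) for all s, where e₁ is the first standard basis vector and v¹(s) is the first component of v(s). If ‖v(0)‖² = 1, then ‖v(s)‖² = 1 for all s ∈ ℝ. -/
open Matrix

theorem stmt10 (n : ℕ) (hn : 2 ≤ n)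
    (A : ℝ → Matrix (Fin n) (Fin n) ℝ)
    (hAcont : Continuous A)
    (hA : ∀ s : ℝ, (A s).transpose = -(A s))
    (v : ℝ → EuclideanSpace ℝ (Fin n))
    (hv : ∀ s : ℝ, HasDerivAt v
      ((WithLp.equiv 2 (Fin n → ℝ)).symm
        ((A s).mulVec (v s) - Pi.single (⟨0, by omega⟩ : Fin n) (1 : ℝ))
        + (v s ⟨0, by omega⟩) • (v s)) s)
    (h0 : ‖v 0‖ ^ 2 = 1) :
    ∀ s : ℝ, ‖v s‖ ^ 2 = 1 := by
  intro s
  set i0 : Fin n := ⟨0, by omega⟩ with hi0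
  have hvc : Continuous v := continuous_iff_continuousAt.mpr fun t => (hv t).continuousAt
  have hc : Continuous (fun t : ℝ => 2 * v t i0) := by
    have : Continuous (fun t : ℝ => v t i0) := (continuous_apply i0).comp ((PiLp.continuous_ofLp 2 _).comp hvc)
    exact continuous_const.mul this
  set F : ℝ → ℝ := fun t => ∫ x in (0:ℝ)..t, 2 * v x i0 with hF
  have hFd : ∀ t : ℝ, HasDerivAt F (2 * v t i0) t := by
    intro t
    exact intervalIntegral.integral_hasDerivAt_right (hc.intervalIntegrable 0 t)
      (hc.stronglyMeasurableAtFilter _ _) hc.continuousAt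
  -- derivative of u = ‖v‖² - 1
  have hu : ∀ t : ℝ, HasDerivAt (fun r => ‖v r‖ ^ 2 - 1)
      (2 * v t i0 * (‖v t‖ ^ 2 - 1)) t := by
    intro t
    have h1 := ((hv t).inner ℝ (hv t)).sub_const 1
    have hdot : ∀ w : Fin n → ℝ, (A t *ᵥ w) ⬝ᵥ w = 0 := by
      intro w
      have h2 : w ⬝ᵥ (A t *ᵥ w) = (w ᵥ* A t) ⬝ᵥ w := Matrix.dotProduct_mulVec _ _ _
      rw [← Matrix.mulVec_transpose, hA t, Matrix.neg_mulVec, neg_dotProduct,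
        dotProduct_comm] at h2
      linarith
    set D : EuclideanSpace ℝ (Fin n) := (WithLp.equiv 2 (Fin n → ℝ)).symm
        ((A t *ᵥ (v t)) - Pi.single i0 (1 : ℝ)) + (v t i0) • (v t) with hD
    have hkey : (inner ℝ (v t) D : ℝ) = v t i0 * ‖v t‖ ^ 2 - v t i0 := by
      have hnorm : (inner ℝ (v t) (v t) : ℝ) = ‖v t‖ ^ 2 := real_inner_self_eq_norm_sq _
      rw [hD, inner_add_right, inner_smul_right, hnorm]
      have hmain : (inner ℝ (v t) ((WithLp.equiv 2 (Fin n → ℝ)).symm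
          ((A t *ᵥ (v t)) - Pi.single i0 (1 : ℝ))) : ℝ) = - v t i0 := by
        rw [PiLp.inner_apply]
        simp only [WithLp.equiv_symm_apply, WithLp.ofLp_toLp, Pi.sub_apply, RCLike.inner_apply, conj_trivial]
        rw [Finset.sum_congr rfl (fun i _ => mul_comm ((A t *ᵥ (v t).ofLp) i - (Pi.single i0 (1:ℝ) : Fin n → ℝ) i) ((v t).ofLp i))]
        have hsum : ∑ i, v t i * ((A t *ᵥ (v t)) i - (Pi.single i0 (1:ℝ) : Fin n → ℝ) i) =
            ((A t *ᵥ (fun i => v t i)) ⬝ᵥ (fun i => v t i)) - v t i0 := by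
          simp only [mul_sub]
          rw [Finset.sum_sub_distrib]
          congr 1
          · simp [dotProduct, mul_comm]
          · rw [Finset.sum_eq_single i0]
            · simp
            · intro b _ hb; rw [Pi.single_eq_of_ne hb]; ring
            · intro h; exact absurd (Finset.mem_univ i0) h
        rw [hsum, hdot]; ring
      rw [hmain]; ring
    have hkey2 : (inner ℝ D (v t) : ℝ) = v t i0 * ‖v t‖ ^ 2 - v t i0 := by
      rw [real_inner_comm]; exact hkey
    have hval : (inner ℝ (v t) D : ℝ) + (inner ℝ D (v t) : ℝ)
        = 2 * v t i0 * ((inner ℝ (v t) (v t) : ℝ) - 1) := by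
      rw [hkey, hkey2, real_inner_self_eq_norm_sq]; ring
    rw [hval] at h1
    simp only [real_inner_self_eq_norm_sq] at h1
    exact h1
  -- g = u * exp(-F) has zero derivative
  set g : ℝ → ℝ := fun t => (‖v t‖ ^ 2 - 1) * Real.exp (-F t) with hg
  have hgd : ∀ t : ℝ, HasDerivAt g 0 t := by
    intro t
    have := (hu t).mul ((hFd t).neg.exp)
    refine (show HasDerivAt g _ t from this).congr_deriv ?_
    ring
  have hgc : ∀ t : ℝ, g t = g 0 :=
    fun t => is_const_of_deriv_eq_zero (fun x => (hgd x).differentiableAt)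
      (fun x => (hgd x).deriv) t 0
  have hg0 : g 0 = 0 := by simp [hg, h0]
  have hgs := hgc s
  rw [hg0] at hgs
  have hexp : Real.exp (-F s) ≠ 0 := Real.exp_ne_zero _
  have hzero : ‖v s‖ ^ 2 - 1 = 0 := by
    rcases mul_eq_zero.mp hgs with h | h
    · exact h
    · exact absurd h hexp
  linarith
end

section
/- Let r > 0 and let differentiable functions v¹, v², v³ : ℝ → ℝ solve the circular-tractrix ODE system with parameter r together with the unit-length constraint (v¹(s))² + (v²(s))² + (v³(s))² = 1 for all s. Define the curves f̃, f, w : ℝ → ℝ³ by f̃(s) = (r·cos(s/r), r·sin(s/r), 0), w(s) = (−v¹(s)·sin(s/r) − v²(s)·cos(s/r), v¹(s)·cos(s/r) − v²(s)·sin(s/r), v³(s)), and f(s) = f̃(s) + w(s). Then for all s ∈ ℝ: ‖f(s) − f̃(s)‖ = 1, f′(s) = v¹(s)·(f(s) − f̃(s)), the cross product (f(s) − f̃(s)) × f′(s) = 0, and ‖f′(s)‖ = |v¹(s)|; in particular f is a tractrix with directrix the circle f̃, and f is regular exactly at points where v¹(s) ≠ 0. -/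
lemma hasDerivAt_euc3 (a b c : ℝ → ℝ) (a' b' c' : ℝ) (s : ℝ)
    (ha : HasDerivAt a a' s) (hb : HasDerivAt b b' s) (hc : HasDerivAt c c' s) :
    HasDerivAt (fun t => (WithLp.equiv 2 (Fin 3 → ℝ)).symm ![a t, b t, c t])
      ((WithLp.equiv 2 (Fin 3 → ℝ)).symm ![a', b', c']) s := by
  have h : HasDerivAt (fun t => ![a t, b t, c t]) ![a', b', c'] s := by
    rw [hasDerivAt_pi]
    intro i
    fin_cases i <;> simpa
  have := ((PiLp.continuousLinearEquiv 2 ℝ (fun _ : Fin 3 => ℝ)).symm.toContinuousLinearMap).hasFDerivAt.comp_hasDerivAt s h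
  simpa using (by exact this : HasDerivAt (fun t => (WithLp.equiv 2 (Fin 3 → ℝ)).symm ![a t, b t, c t]) ((WithLp.equiv 2 (Fin 3 → ℝ)).symm ![a', b', c']) s)

theorem stmt12 (r : ℝ) (hr : 0 < r) (v1 v2 v3 : ℝ → ℝ)
    (hsol : SolvesCircularTractrix r v1 v2 v3)
    (hunit : ∀ s : ℝ, (v1 s) ^ 2 + (v2 s) ^ 2 + (v3 s) ^ 2 = 1)
    (ft w f : ℝ → EuclideanSpace ℝ (Fin 3))
    (hft : ∀ s, ft s = (WithLp.equiv 2 (Fin 3 → ℝ)).symm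
      ![r * Real.cos (s / r), r * Real.sin (s / r), 0])
    (hw : ∀ s, w s = (WithLp.equiv 2 (Fin 3 → ℝ)).symm
      ![-(v1 s) * Real.sin (s / r) - v2 s * Real.cos (s / r),
        v1 s * Real.cos (s / r) - v2 s * Real.sin (s / r),
        v3 s])
    (hf : ∀ s, f s = ft s + w s) :
    ∀ s : ℝ,
      ‖f s - ft s‖ = 1 ∧
      HasDerivAt f (v1 s • (f s - ft s)) s ∧
      crossProduct (WithLp.equiv 2 (Fin 3 → ℝ) (f s - ft s))
        (WithLp.equiv 2 (Fin 3 → ℝ) (v1 s • (f s - ft s))) = 0 ∧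
      ‖v1 s • (f s - ft s)‖ = |v1 s| := by
  intro s
  obtain ⟨hv1, hv2, hv3⟩ := hsol
  have hr' : r ≠ 0 := ne_of_gt hr
  have hsub : f s - ft s = w s := by rw [hf s]; abel
  have hpyth := Real.sin_sq_add_cos_sq (s / r)
  have hnorm : ‖w s‖ = 1 := by
    rw [hw s, EuclideanSpace.norm_eq]
    have : Real.sqrt 1 = 1 := Real.sqrt_one
    rw [show (1 : ℝ) = Real.sqrt 1 from Real.sqrt_one.symm]
    congr 1
    simp only [WithLp.equiv_symm_apply, PiLp.toLp_apply, Fin.sum_univ_three]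
    simp [Matrix.cons_val_zero, Matrix.cons_val_one, Matrix.head_cons]
    nlinarith [hunit s, hpyth]
  refine ⟨by rw [hsub, hnorm], ?_, ?_, ?_⟩
  · -- derivative
    have hdiv : HasDerivAt (fun t : ℝ => t / r) (1 / r) s := (hasDerivAt_id s).div_const r
    have hcos : HasDerivAt (fun t : ℝ => Real.cos (t / r))
        (-Real.sin (s / r) * (1 / r)) s := by have := (Real.hasDerivAt_cos (s / r)).comp s hdiv; exact this
    have hsin : HasDerivAt (fun t : ℝ => Real.sin (t / r))
        (Real.cos (s / r) * (1 / r)) s := by have := (Real.hasDerivAt_sin (s / r)).comp s hdiv; exact this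
    have h1 : HasDerivAt (fun t => r * Real.cos (t / r) + (-(v1 t) * Real.sin (t / r) - v2 t * Real.cos (t / r)))
        (r * (-Real.sin (s / r) * (1 / r)) +
          ((-((1 / r) * v2 s + (v1 s) ^ 2 - 1)) * Real.sin (s / r) + (-(v1 s)) * (Real.cos (s / r) * (1 / r)) -
            ((-(1 / r) * v1 s + v1 s * v2 s) * Real.cos (s / r) + v2 s * (-Real.sin (s / r) * (1 / r))))) s :=
      (hcos.const_mul r).add ((((hv1 s).neg.mul hsin)).sub ((hv2 s).mul hcos))
    have h2 : HasDerivAt (fun t => r * Real.sin (t / r) + (v1 t * Real.cos (t / r) - v2 t * Real.sin (t / r)))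
        (r * (Real.cos (s / r) * (1 / r)) +
          ((((1 / r) * v2 s + (v1 s) ^ 2 - 1)) * Real.cos (s / r) + v1 s * (-Real.sin (s / r) * (1 / r)) -
            ((-(1 / r) * v1 s + v1 s * v2 s) * Real.sin (s / r) + v2 s * (Real.cos (s / r) * (1 / r))))) s :=
      (hsin.const_mul r).add (((hv1 s).mul hcos).sub ((hv2 s).mul hsin))
    have h3 : HasDerivAt (fun t => (0 : ℝ) + v3 t) ((0 : ℝ) + v1 s * v3 s) s :=
      (hasDerivAt_const s (0 : ℝ)).add (hv3 s)
    have hD := hasDerivAt_euc3 _ _ _ _ _ _ s h1 h2 h3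
    have hfeq : f = fun t => (WithLp.equiv 2 (Fin 3 → ℝ)).symm
        ![r * Real.cos (t / r) + (-(v1 t) * Real.sin (t / r) - v2 t * Real.cos (t / r)),
          r * Real.sin (t / r) + (v1 t * Real.cos (t / r) - v2 t * Real.sin (t / r)),
          (0 : ℝ) + v3 t] := by
      funext t
      rw [hf t, hft t, hw t]
      rw [WithLp.equiv_symm_apply, ← WithLp.toLp_add]
      congr 1
      funext i
      fin_cases i <;> simp
    rw [← hfeq] at hD
    convert hD using 1
    rw [hsub, hw s, WithLp.equiv_symm_apply, ← WithLp.toLp_smul]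
    congr 1
    funext i
    fin_cases i <;>
      simp only [Matrix.smul_cons, smul_eq_mul, Matrix.smul_empty, Matrix.cons_val_zero,
        Matrix.cons_val_one, Matrix.head_cons, Matrix.cons_val_fin_one, Fin.reduceFinMk, Matrix.cons_val] <;>
      field_simp <;> ring
  · rw [hsub, ]
    change crossProduct _ (v1 s • WithLp.equiv 2 (Fin 3 → ℝ) (w s)) = 0
    rw [map_smul, cross_self, smul_zero]
  · rw [norm_smul, hsub, hnorm, mul_one, Real.norm_eq_abs]
end

section
/- Let c₂, c₃ ∈ ℝ, c₁ = 1 + c₂², and let v¹, v², v³ be as in the general solution for r = 1: Q₀(s) = c₁ + (s + c₃)², v¹(s) = −2(s + c₃)/Q₀(s), v²(s) = 1 − 2/Q₀(s), v³(s) = 2c₂/Q₀(s). Let a, b be nonzero real constants and let f : ℝ² → ℝ⁴ be the generalized Dini surface built from (v¹, v², v³, r = 1, a, b). Define E(s,φ) = ⟨∂f/∂s, ∂f/∂s⟩, F(s,φ) = ⟨∂f/∂s, ∂f/∂φ⟩, G(s,φ) = ⟨∂f/∂φ, ∂f/∂φ⟩. Then, with P(s) = 4(s + c₃)²/Q₀(s)²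 and Q(s) = 4(a² + b²c₂²)/Q₀(s)², one has E = P, F = a·P, and G = a²·P + Q; i.e., the first fundamental form is g = P·(ds + a·dφ)² + Q·dφ². -/
set_option maxHeartbeats 1000000

/-- The generalized Dini surface built from functions `v1, v2, v3`, radius `r`
and screw-rotation constants `a, b`: `f(s,φ) = R(φ)·c(s)` where `R(φ)` is the
block-diagonal rotation with angles `aφ` and `bφ`. -/
noncomputable def diniSurface (v1 v2 v3 : ℝ → ℝ) (r a b : ℝ) :
    ℝ → ℝ → EuclideanSpace ℝ (Fin 4) :=
  fun s φ => (WithLp.equiv 2 (Fin 4 → ℝ)).symm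
    (Matrix.mulVec
      !![Real.cos (a * φ), -Real.sin (a * φ), 0, 0;
         Real.sin (a * φ),  Real.cos (a * φ), 0, 0;
         0, 0, Real.cos (b * φ), -Real.sin (b * φ);
         0, 0, Real.sin (b * φ),  Real.cos (b * φ)]
      ![r * Real.cos (s / r) - v1 s * Real.sin (s / r) - v2 s * Real.cos (s / r),
        r * Real.sin (s / r) + v1 s * Real.cos (s / r) - v2 s * Real.sin (s / r),
        v3 s, 0])

theorem stmt14 (c₁ c₂ c₃ a b : ℝ) (hc₁ : c₁ = 1 + c₂ ^ 2)
    (ha : a ≠ 0) (hb : b ≠ 0)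
    (Q₀ v1 v2 v3 P Q : ℝ → ℝ)
    (hQ₀ : ∀ s, Q₀ s = c₁ + (s + c₃) ^ 2)
    (hv1 : ∀ s, v1 s = -(2 * (s + c₃)) / Q₀ s)
    (hv2 : ∀ s, v2 s = 1 - 2 / Q₀ s)
    (hv3 : ∀ s, v3 s = 2 * c₂ / Q₀ s)
    (hP : ∀ s, P s = 4 * (s + c₃) ^ 2 / (Q₀ s) ^ 2)
    (hQ : ∀ s, Q s = 4 * (a ^ 2 + b ^ 2 * c₂ ^ 2) / (Q₀ s) ^ 2)
    (f : ℝ → ℝ → EuclideanSpace ℝ (Fin 4))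
    (hf : f = diniSurface v1 v2 v3 1 a b)
    (fs fφ : ℝ → ℝ → EuclideanSpace ℝ (Fin 4))
    (hfs : ∀ s φ : ℝ, HasDerivAt (fun t => f t φ) (fs s φ) s)
    (hfφ : ∀ s φ : ℝ, HasDerivAt (fun ψ => f s ψ) (fφ s φ) φ)
    (E F G : ℝ → ℝ → ℝ)
    (hE : ∀ s φ : ℝ, E s φ = inner ℝ (fs s φ) (fs s φ))
    (hF : ∀ s φ : ℝ, F s φ = inner ℝ (fs s φ) (fφ s φ))
    (hG : ∀ s φ : ℝ, G s φ = inner ℝ (fφ s φ) (fφ s φ)) :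
    ∀ s φ : ℝ,
      E s φ = P s ∧ F s φ = a * P s ∧ G s φ = a ^ 2 * P s + Q s := by
  intro s φ
  have hpos : ∀ t : ℝ, (0:ℝ) < c₁ + (t + c₃) ^ 2 := fun t => by
    nlinarith [sq_nonneg c₂, sq_nonneg (t + c₃)]
  have hne : ∀ t : ℝ, c₁ + (t + c₃) ^ 2 ≠ 0 := fun t => (hpos t).ne'
  -- simplified form of f
  have hfe : ∀ t ψ : ℝ, f t ψ = (WithLp.equiv 2 (Fin 4 → ℝ)).symm
      ![Real.cos (a*ψ) * (2*((t+c₃)*Real.sin t + Real.cos t)/(c₁+(t+c₃)^2))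
          - Real.sin (a*ψ) * (2*(Real.sin t - (t+c₃)*Real.cos t)/(c₁+(t+c₃)^2)),
        Real.sin (a*ψ) * (2*((t+c₃)*Real.sin t + Real.cos t)/(c₁+(t+c₃)^2))
          + Real.cos (a*ψ) * (2*(Real.sin t - (t+c₃)*Real.cos t)/(c₁+(t+c₃)^2)),
        Real.cos (b*ψ) * (2*c₂/(c₁+(t+c₃)^2)),
        Real.sin (b*ψ) * (2*c₂/(c₁+(t+c₃)^2))] := by
    intro t ψ
    rw [hf]
    show (WithLp.equiv 2 (Fin 4 → ℝ)).symm _ = _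
    refine congrArg _ ?_
    funext i
    fin_cases i <;>
      (simp [Matrix.mulVec, dotProduct, Fin.sum_univ_four, hv1, hv2, hv3, hQ₀];
       (try field_simp); (try ring))
  -- abbreviations (values at s)
  set cA := Real.cos (a*φ) with hcA
  set sA := Real.sin (a*φ) with hsA
  set cB := Real.cos (b*φ) with hcB
  set sB := Real.sin (b*φ) with hsB
  set g0 : ℝ := 2*((s+c₃)*Real.sin s + Real.cos s)/(c₁+(s+c₃)^2) with hg0
  set g1 : ℝ := 2*(Real.sin s - (s+c₃)*Real.cos s)/(c₁+(s+c₃)^2) with hg1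
  set g2 : ℝ := 2*c₂/(c₁+(s+c₃)^2) with hg2
  set D0 : ℝ := (2*((s+c₃)*Real.cos s)*(c₁+(s+c₃)^2)
        - 2*((s+c₃)*Real.sin s + Real.cos s)*(2*(s+c₃)))/(c₁+(s+c₃)^2)^2 with hD0
  set D1 : ℝ := (2*((s+c₃)*Real.sin s)*(c₁+(s+c₃)^2)
        - 2*(Real.sin s - (s+c₃)*Real.cos s)*(2*(s+c₃)))/(c₁+(s+c₃)^2)^2 with hD1
  set D2 : ℝ := (0*(c₁+(s+c₃)^2) - 2*c₂*(2*(s+c₃)))/(c₁+(s+c₃)^2)^2 with hD2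
  -- derivative of the denominator
  have hdenD : HasDerivAt (fun t : ℝ => c₁ + (t+c₃)^2) (2*(s+c₃)) s := by
    have := ((((hasDerivAt_id s).add_const c₃)).pow 2).const_add c₁
    refine this.congr_deriv ?_
    simp [id_eq]
    try ring
  -- scalar s-derivatives
  have h0 : HasDerivAt (fun t => 2*((t+c₃)*Real.sin t + Real.cos t)/(c₁+(t+c₃)^2)) D0 s := by
    have hnum : HasDerivAt (fun t : ℝ => 2*((t+c₃)*Real.sin t + Real.cos t))
        (2*((s+c₃)*Real.cos s)) s := by
      have := ((((hasDerivAt_id s).add_const c₃).mul (Real.hasDerivAt_sin s)).add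
        (Real.hasDerivAt_cos s)).const_mul 2
      refine this.congr_deriv ?_
      simp [id_eq]
      try ring
    exact hnum.div hdenD (hne s)
  have h1 : HasDerivAt (fun t => 2*(Real.sin t - (t+c₃)*Real.cos t)/(c₁+(t+c₃)^2)) D1 s := by
    have hnum : HasDerivAt (fun t : ℝ => 2*(Real.sin t - (t+c₃)*Real.cos t))
        (2*((s+c₃)*Real.sin s)) s := by
      have := ((Real.hasDerivAt_sin s).sub
        (((hasDerivAt_id s).add_const c₃).mul (Real.hasDerivAt_cos s))).const_mul 2
      refine this.congr_deriv ?_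
      simp [id_eq]
      try ring
    exact hnum.div hdenD (hne s)
  have h2 : HasDerivAt (fun t => 2*c₂/(c₁+(t+c₃)^2)) D2 s := by
    have hnum : HasDerivAt (fun _ : ℝ => 2*c₂) 0 s := hasDerivAt_const s _
    exact hnum.div hdenD (hne s)
  -- vector s-derivative
  have hw : HasDerivAt (fun t => f t φ)
      ((WithLp.equiv 2 (Fin 4 → ℝ)).symm
        ![cA*D0 - sA*D1, sA*D0 + cA*D1, cB*D2, sB*D2]) s := by
    have hvec : HasDerivAt (fun t => (![Real.cos (a*φ) * (2*((t+c₃)*Real.sin t + Real.cos t)/(c₁+(t+c₃)^2))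
          - Real.sin (a*φ) * (2*(Real.sin t - (t+c₃)*Real.cos t)/(c₁+(t+c₃)^2)),
        Real.sin (a*φ) * (2*((t+c₃)*Real.sin t + Real.cos t)/(c₁+(t+c₃)^2))
          + Real.cos (a*φ) * (2*(Real.sin t - (t+c₃)*Real.cos t)/(c₁+(t+c₃)^2)),
        Real.cos (b*φ) * (2*c₂/(c₁+(t+c₃)^2)),
        Real.sin (b*φ) * (2*c₂/(c₁+(t+c₃)^2))] : Fin 4 → ℝ))
        ![cA*D0 - sA*D1, sA*D0 + cA*D1, cB*D2, sB*D2] s := by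
      rw [hasDerivAt_pi]
      intro i
      fin_cases i
      · simp only [Fin.zero_eta, Fin.mk_one, Fin.isValue, Matrix.cons_val_zero, Matrix.cons_val_one]
        exact (h0.const_mul cA).sub (h1.const_mul sA)
      · simp only [Fin.zero_eta, Fin.mk_one, Fin.isValue, Matrix.cons_val_zero, Matrix.cons_val_one]
        exact (h0.const_mul sA).add (h1.const_mul cA)
      · simpa using h2.const_mul cB
      · simpa using h2.const_mul sB
    have hcomp := ((EuclideanSpace.equiv (Fin 4) ℝ).symm.hasFDerivAt).comp_hasDerivAt s hvec
    have heq : (fun t => f t φ) = fun t =>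
        (EuclideanSpace.equiv (Fin 4) ℝ).symm
          ![Real.cos (a*φ) * (2*((t+c₃)*Real.sin t + Real.cos t)/(c₁+(t+c₃)^2))
              - Real.sin (a*φ) * (2*(Real.sin t - (t+c₃)*Real.cos t)/(c₁+(t+c₃)^2)),
            Real.sin (a*φ) * (2*((t+c₃)*Real.sin t + Real.cos t)/(c₁+(t+c₃)^2))
              + Real.cos (a*φ) * (2*(Real.sin t - (t+c₃)*Real.cos t)/(c₁+(t+c₃)^2)),
            Real.cos (b*φ) * (2*c₂/(c₁+(t+c₃)^2)),
            Real.sin (b*φ) * (2*c₂/(c₁+(t+c₃)^2))] := funext fun t => hfe t φ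
    rw [heq]
    exact hcomp
  have hfs_eq : fs s φ = (WithLp.equiv 2 (Fin 4 → ℝ)).symm
      ![cA*D0 - sA*D1, sA*D0 + cA*D1, cB*D2, sB*D2] := (hfs s φ).unique hw
  -- φ-derivative
  have hwφ : HasDerivAt (fun ψ => f s ψ)
      ((WithLp.equiv 2 (Fin 4 → ℝ)).symm
        ![-(a*sA)*g0 - (a*cA)*g1, (a*cA)*g0 - (a*sA)*g1, -(b*sB)*g2, (b*cB)*g2]) φ := by
    have hca : HasDerivAt (fun ψ => Real.cos (a*ψ)) (-(a*sA)) φ := by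
      have := ((hasDerivAt_id φ).const_mul a).cos
      refine this.congr_deriv ?_
      simp [id_eq, hsA]
      try ring
    have hsa : HasDerivAt (fun ψ => Real.sin (a*ψ)) (a*cA) φ := by
      have := ((hasDerivAt_id φ).const_mul a).sin
      refine this.congr_deriv ?_
      simp [id_eq, hcA]
      try ring
    have hcb : HasDerivAt (fun ψ => Real.cos (b*ψ)) (-(b*sB)) φ := by
      have := ((hasDerivAt_id φ).const_mul b).cos
      refine this.congr_deriv ?_
      simp [id_eq, hsB]
      try ring
    have hsb : HasDerivAt (fun ψ => Real.sin (b*ψ)) (b*cB) φ := by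
      have := ((hasDerivAt_id φ).const_mul b).sin
      refine this.congr_deriv ?_
      simp [id_eq, hcB]
      try ring
    have hvec : HasDerivAt (fun ψ => (![Real.cos (a*ψ) * g0 - Real.sin (a*ψ) * g1,
        Real.sin (a*ψ) * g0 + Real.cos (a*ψ) * g1,
        Real.cos (b*ψ) * g2, Real.sin (b*ψ) * g2] : Fin 4 → ℝ))
        ![-(a*sA)*g0 - (a*cA)*g1, (a*cA)*g0 - (a*sA)*g1, -(b*sB)*g2, (b*cB)*g2] φ := by
      rw [hasDerivAt_pi]
      intro i
      fin_cases i
      · simp only [Fin.zero_eta, Fin.mk_one, Fin.isValue, Matrix.cons_val_zero, Matrix.cons_val_one]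
        exact (hca.mul_const g0).sub (hsa.mul_const g1)
      · simp only [Fin.zero_eta, Fin.mk_one, Fin.isValue, Matrix.cons_val_zero, Matrix.cons_val_one]
        have := (hsa.mul_const g0).add (hca.mul_const g1)
        exact this.congr_deriv (by ring)
      · simpa using hcb.mul_const g2
      · simpa using hsb.mul_const g2
    have hcomp := ((EuclideanSpace.equiv (Fin 4) ℝ).symm.hasFDerivAt).comp_hasDerivAt φ hvec
    have heq : (fun ψ => f s ψ) = fun ψ =>
        (EuclideanSpace.equiv (Fin 4) ℝ).symm
          ![Real.cos (a*ψ) * g0 - Real.sin (a*ψ) * g1,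
            Real.sin (a*ψ) * g0 + Real.cos (a*ψ) * g1,
            Real.cos (b*ψ) * g2, Real.sin (b*ψ) * g2] := funext fun ψ => hfe s ψ
    rw [heq]
    exact hcomp
  have hfφ_eq : fφ s φ = (WithLp.equiv 2 (Fin 4 → ℝ)).symm
      ![-(a*sA)*g0 - (a*cA)*g1, (a*cA)*g0 - (a*sA)*g1, -(b*sB)*g2, (b*cB)*g2] :=
    (hfφ s φ).unique hwφ
  -- inner products
  have hA : sA^2 + cA^2 = 1 := Real.sin_sq_add_cos_sq (a*φ)
  have hB : sB^2 + cB^2 = 1 := Real.sin_sq_add_cos_sq (b*φ)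
  have hS : Real.sin s^2 + Real.cos s^2 = 1 := Real.sin_sq_add_cos_sq s
  have hEe : E s φ = (cA*D0 - sA*D1)^2 + (sA*D0 + cA*D1)^2 + (cB*D2)^2 + (sB*D2)^2 := by
    rw [hE, hfs_eq]
    simp [EuclideanSpace.norm_sq_eq, PiLp.inner_apply, RCLike.inner_apply, Fin.sum_univ_four]
    try ring
  have hFe : F s φ = (cA*D0 - sA*D1)*(-(a*sA)*g0 - (a*cA)*g1)
      + (sA*D0 + cA*D1)*((a*cA)*g0 - (a*sA)*g1)
      + (cB*D2)*(-(b*sB)*g2) + (sB*D2)*((b*cB)*g2) := by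
    rw [hF, hfs_eq, hfφ_eq]
    simp [PiLp.inner_apply, RCLike.inner_apply, Fin.sum_univ_four]
    try ring
  have hGe : G s φ = (-(a*sA)*g0 - (a*cA)*g1)^2 + ((a*cA)*g0 - (a*sA)*g1)^2
      + (-(b*sB)*g2)^2 + ((b*cB)*g2)^2 := by
    rw [hG, hfφ_eq]
    simp [EuclideanSpace.norm_sq_eq, PiLp.inner_apply, RCLike.inner_apply, Fin.sum_univ_four]
    try ring
  refine ⟨?_, ?_, ?_⟩
  · rw [hEe, hP, hQ₀]
    have h1 : (cA*D0 - sA*D1)^2 + (sA*D0 + cA*D1)^2 + (cB*D2)^2 + (sB*D2)^2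
        = D0^2 + D1^2 + D2^2 := by
      linear_combination (D0^2 + D1^2) * hA + D2^2 * hB
    rw [h1, hD0, hD1, hD2]
    rw [div_pow, div_pow, div_pow, ← add_div, ← add_div,
      div_eq_div_iff (pow_ne_zero _ (pow_ne_zero _ (hne s))) (pow_ne_zero _ (hne s))]
    linear_combination (4*(s+c₃)^2*(c₁+(s+c₃)^2)^2*((c₁+(s+c₃)^2-2)^2+4*(s+c₃)^2)) * hS - (16*(s+c₃)^2*(c₁+(s+c₃)^2)^2) * hc₁
  · rw [hFe, hP, hQ₀]
    have h1 : (cA*D0 - sA*D1)*(-(a*sA)*g0 - (a*cA)*g1)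
        + (sA*D0 + cA*D1)*((a*cA)*g0 - (a*sA)*g1)
        + (cB*D2)*(-(b*sB)*g2) + (sB*D2)*((b*cB)*g2)
        = a*(D1*g0 - D0*g1) := by
      linear_combination (a*(D1*g0 - D0*g1)) * hA
    rw [h1, hD0, hD1, hg0, hg1]
    rw [div_mul_div_comm, div_mul_div_comm, div_sub_div_same, mul_div_assoc', mul_div_assoc',
      div_eq_div_iff (mul_ne_zero (pow_ne_zero _ (hne s)) (hne s)) (pow_ne_zero _ (hne s))]
    linear_combination (4*a*(s+c₃)^2*(c₁+(s+c₃)^2)^3) * hS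
  · rw [hGe, hP, hQ, hQ₀]
    have h1 : (-(a*sA)*g0 - (a*cA)*g1)^2 + ((a*cA)*g0 - (a*sA)*g1)^2
        + (-(b*sB)*g2)^2 + ((b*cB)*g2)^2
        = a^2*(g0^2 + g1^2) + b^2*g2^2 := by
      linear_combination (a^2*(g0^2 + g1^2)) * hA + (b^2*g2^2) * hB
    rw [h1, hg0, hg1, hg2]
    rw [div_pow, div_pow, div_pow, ← add_div, mul_div_assoc', mul_div_assoc', mul_div_assoc',
      ← add_div, ← add_div, div_left_inj' (pow_ne_zero _ (hne s))]
    linear_combination (4*a^2*((s+c₃)^2+1)) * hS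
end
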